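/- Let P be a probability measure on a measurable space Z, let g : Z → ℝ be a bounded measurable function, and let λ > 0. Define Z_λ = ∫ exp(g/λ) dP and the tilted probability measure Q* by dQ*/dP = exp(g/λ)/Z_λ. Then for every probability measure Q absolutely continuous with respect to P with KL(Q ‖ P) < ∞, we have ∫ g dQ − λ · KL(Q ‖ P) ≤ λ log Z_λ, with equality if and only if Q = Q*. -/
import Mathlib


open MeasureTheory Real
open scoped ENNReal Classical

/-- The Kullback–Leibler divergence `KL(Q ‖ P) = ∫ log (dQ/dP) dQ` when `Q ≪ P`
(and this integral exists), and `+∞` otherwise. -/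
noncomputable def klDiv {Z : Type*} [MeasurableSpace Z] (Q P : Measure Z) : ℝ≥0∞ :=
  if Q ≪ P ∧ Integrable (fun z => Real.log (Q.rnDeriv P z).toReal) Q
  then ENNReal.ofReal (∫ z, Real.log (Q.rnDeriv P z).toReal ∂Q)
  else ∞

lemma gibbs_aux {α : Type*} [MeasurableSpace α] {μ ν : Measure α}
    [IsProbabilityMeasure μ] [IsProbabilityMeasure ν] (hμν : μ ≪ ν)
    (h_int : Integrable (llr μ ν) μ) :
    0 ≤ ∫ x, llr μ ν x ∂μ ∧ (∫ x, llr μ ν x ∂μ = 0 ↔ μ = ν) := by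
  set h : α → ℝ := fun x => (μ.rnDeriv ν x).toReal with hh
  have h_nonneg : ∀ x, 0 ≤ h x := fun x => ENNReal.toReal_nonneg
  set φ : α → ℝ := fun x => h x * llr μ ν x - h x + 1 with hφdef
  have key_pt : ∀ t : ℝ, 0 ≤ t → (0 ≤ t * Real.log t - t + 1 ∧
      (t * Real.log t - t + 1 = 0 → t = 1)) := by
    intro t ht
    rcases eq_or_lt_of_le ht with h0 | hpos
    · simp [← h0]
    · rcases eq_or_ne t 1 with h1 | h1
      · simp [h1]
      · have hlt : Real.log t⁻¹ < t⁻¹ - 1 :=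
          Real.log_lt_sub_one_of_pos (inv_pos.2 hpos) (fun h => h1 (by rwa [inv_eq_one] at h))
        rw [Real.log_inv] at hlt
        have h2 := mul_lt_mul_of_pos_left hlt hpos
        have h3 : t * t⁻¹ = 1 := mul_inv_cancel₀ hpos.ne'
        constructor
        · nlinarith
        · intro habs; nlinarith
  have hφ_nonneg : ∀ x, 0 ≤ φ x := by
    intro x
    exact (key_pt (h x) (h_nonneg x)).1
  have int1 : Integrable (fun x => h x * llr μ ν x) ν := by
    have := (integrable_rnDeriv_smul_iff (E := ℝ) hμν).mpr h_int
    simpa [smul_eq_mul] using this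
  have int2 : Integrable h ν := Measure.integrable_toReal_rnDeriv
  have intφ : Integrable φ ν := (int1.sub int2).add (integrable_const 1)
  have hint_h : ∫ x, h x ∂ν = 1 := by
    rw [hh, Measure.integral_toReal_rnDeriv hμν]; simp
  have h_eq : ∫ x, llr μ ν x ∂μ = ∫ x, h x * llr μ ν x ∂ν := by
    rw [← integral_rnDeriv_smul hμν (f := llr μ ν)]
    simp [smul_eq_mul, hh]
  have int3 : Integrable (fun x => h x * llr μ ν x - h x) ν := int1.sub int2
  have hφ_int : ∫ x, φ x ∂ν = ∫ x, llr μ ν x ∂μ := by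
    rw [h_eq]
    calc ∫ x, φ x ∂ν = ∫ x, (h x * llr μ ν x - h x) + 1 ∂ν := rfl
      _ = (∫ x, (h x * llr μ ν x - h x) ∂ν) + ∫ _x, (1 : ℝ) ∂ν :=
          integral_add int3 (integrable_const 1)
      _ = ∫ x, h x * llr μ ν x ∂ν := by
          rw [integral_sub int1 int2, hint_h]; simp
  have h_nonneg_total : 0 ≤ ∫ x, llr μ ν x ∂μ := by
    rw [← hφ_int]; exact integral_nonneg hφ_nonneg
  refine ⟨h_nonneg_total, ?_, ?_⟩
  · intro h0
    have hφ0 : ∫ x, φ x ∂ν = 0 := by rw [hφ_int, h0]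
    have hφae : φ =ᵐ[ν] 0 :=
      ((integral_eq_zero_iff_of_nonneg hφ_nonneg intφ).mp hφ0)
    have hae1 : h =ᵐ[ν] fun _ => 1 := by
      filter_upwards [hφae] with x hx
      have : h x * Real.log (h x) - h x + 1 = 0 := hx
      exact (key_pt (h x) (h_nonneg x)).2 this
    have hrn : μ.rnDeriv ν =ᵐ[ν] fun _ => 1 := by
      filter_upwards [hae1, Measure.rnDeriv_lt_top μ ν] with x hx hlt
      have : (μ.rnDeriv ν x).toReal = 1 := hx
      rw [← ENNReal.ofReal_toReal hlt.ne, this]; simp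
    calc μ = ν.withDensity (μ.rnDeriv ν) := (Measure.withDensity_rnDeriv_eq μ ν hμν).symm
      _ = ν.withDensity (fun _ => 1) := withDensity_congr_ae hrn
      _ = ν := by simp
  · intro hEq
    subst hEq
    have : llr μ μ =ᵐ[μ] fun _ => 0 := by
      filter_upwards [Measure.rnDeriv_self μ] with x hx
      simp [llr, hx]
    rw [integral_congr_ae this]; simp

/-- Gibbs' inequality: for every `Q ≪ P` with finite KL divergence,
`∫ g dQ − λ·KL(Q‖P) ≤ λ log ∫ exp(g/λ) dP`, with equality iff `Q` is the
exponentially tilted measure `Q*` with `dQ*/dP = exp(g/λ)/Z_λ`. -/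
theorem gibbs_inequality_tilted_measure
    {Z : Type*} [MeasurableSpace Z] (P : Measure Z) [IsProbabilityMeasure P]
    (g : Z → ℝ) (hg_meas : Measurable g) (M : ℝ) (hg_bdd : ∀ z, |g z| ≤ M)
    (lam : ℝ) (hlam : 0 < lam)
    (Zlam : ℝ) (hZ : Zlam = ∫ z, Real.exp (g z / lam) ∂P)
    (Qstar : Measure Z)
    (hQstar : Qstar = P.withDensity
      (fun z => ENNReal.ofReal (Real.exp (g z / lam) / Zlam))) :
    ∀ Q : Measure Z, IsProbabilityMeasure Q → Q ≪ P → klDiv Q P < ∞ →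
      (∫ z, g z ∂Q) - lam * (klDiv Q P).toReal ≤ lam * Real.log Zlam ∧
      ((∫ z, g z ∂Q) - lam * (klDiv Q P).toReal = lam * Real.log Zlam ↔ Q = Qstar) := by
  intro Q hQprob hQP hKL
  set f : Z → ℝ := fun z => g z / lam with hfdef
  have hlam' : lam ≠ 0 := hlam.ne'
  have hf_meas : Measurable f := hg_meas.div_const lam
  have hfQ : Integrable f Q := by
    refine ⟨hf_meas.aestronglyMeasurable, ?_⟩
    refine HasFiniteIntegral.of_bounded (C := M / lam) (ae_of_all _ fun z => ?_)
    rw [Real.norm_eq_abs, hfdef, abs_div, abs_of_pos hlam]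
    exact div_le_div_of_nonneg_right (hg_bdd z) hlam.le |>.trans_eq rfl
  have hexpP : Integrable (fun z => Real.exp (f z)) P := by
    refine ⟨(hf_meas.exp).aestronglyMeasurable, ?_⟩
    refine HasFiniteIntegral.of_bounded (C := Real.exp (M / lam)) (ae_of_all _ fun z => ?_)
    rw [Real.norm_eq_abs, abs_of_pos (Real.exp_pos _)]
    exact Real.exp_le_exp.2 (div_le_div_of_nonneg_right (abs_le.1 (hg_bdd z)).2 hlam.le)
  have hZpos : 0 < Zlam := hZ ▸ integral_exp_pos hexpP
  have hQstar_tilted : Qstar = P.tilted f := by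
    rw [hQstar, Measure.tilted, hZ]
  have hcond : Q ≪ P ∧ Integrable (fun z => Real.log (Q.rnDeriv P z).toReal) Q := by
    by_contra hc
    rw [klDiv, if_neg hc] at hKL
    exact absurd hKL (lt_irrefl _)
  have h_int : Integrable (llr Q P) Q := hcond.2
  have hKLval : (klDiv Q P).toReal = ∫ z, llr Q P z ∂Q := by
    rw [klDiv, if_pos hcond]
    exact ENNReal.toReal_ofReal (gibbs_aux hQP h_int).1
  haveI hQstar_prob : IsProbabilityMeasure (P.tilted f) := isProbabilityMeasure_tilted hexpP
  have hQQstar : Q ≪ P.tilted f := hQP.trans (absolutelyContinuous_tilted hexpP)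
  have h_int2 : Integrable (llr Q (P.tilted f)) Q :=
    integrable_llr_tilted_right hQP hfQ h_int hexpP
  have hA := gibbs_aux hQQstar h_int2
  have key : ∫ z, llr Q (P.tilted f) z ∂Q
      = ∫ z, llr Q P z ∂Q - ∫ z, f z ∂Q + Real.log Zlam := by
    rw [integral_llr_tilted_right hQP hfQ hexpP h_int, hZ]
  have hfint : ∫ z, f z ∂Q = (∫ z, g z ∂Q) / lam := by
    simp only [hfdef]
    exact integral_div lam g
  have hmain : (∫ z, g z ∂Q) - lam * (klDiv Q P).toReal
      = lam * Real.log Zlam - lam * (∫ z, llr Q (P.tilted f) z ∂Q) := by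
    rw [hKLval, key, hfint]
    field_simp
    ring
  constructor
  · rw [hmain]
    have := mul_nonneg hlam.le hA.1
    linarith
  · rw [hmain, hQstar_tilted]
    constructor
    · intro hEq
      have h0 : lam * (∫ z, llr Q (P.tilted f) z ∂Q) = 0 := by linarith
      exact hA.2.mp ((mul_eq_zero.1 h0).resolve_left hlam')
    · intro hQeq
      rw [hA.2.mpr hQeq]
      ring
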